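/- Let α : A → B be a ring homomorphism such that B, regarded as a left A-module via α, is flat, and let M be an A-regular right A-module. Then the right B-module M ⊗_A B is B-regular. -/

import Mathlib

open CategoryTheory

/-- A class of left `R`-modules (predicate on bundled modules) is *exact* if, in every short
exact sequence of `R`-modules in which two of the three modules belong to the class,
the third belongs to it as well. -/
def IsExactClass {R : Type} [Ring R] (P : ModuleCat.{0} R → Prop) : Prop :=
  ∀ (X Y Z : ModuleCat.{0} R) (f : X ⟶ Y) (g : Y ⟶ Z),
    Function.Injective f → Function.Surjective g → Function.Exact f g →
      ((P X ∧ P Y → P Z) ∧ (P X ∧ P Z → P Y) ∧ (P Y ∧ P Z → P X))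

/-- A class of left `R`-modules is *cocomplete* if it is stable under filtered colimits. -/
def IsCocompleteClass {R : Type} [Ring R] (P : ModuleCat.{0} R → Prop) : Prop :=
  ∀ (J : Type) [SmallCategory J] [IsFiltered J] (F : J ⥤ ModuleCat.{0} R)
    (c : Limits.Cocone F), Limits.IsColimit c → (∀ j, P (F.obj j)) → P c.pt

/-- Finitely generated projective modules. -/
def FGProj {R : Type} [Ring R] (M : ModuleCat.{0} R) : Prop :=
  Module.Finite R M ∧ Module.Projective R M

/-- The category of left `R`-modules is regular: the only cocomplete exact class of modules
containing the finitely generated projective modules is the class of all modules. -/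
def RegularModuleCategory (R : Type) [Ring R] : Prop :=
  ∀ P : ModuleCat.{0} R → Prop, IsExactClass P → IsCocompleteClass P →
    (∀ N, FGProj N → P N) → ∀ M, P M

/-- A (left) `R`-module is *regular* if it belongs to every cocomplete exact class of modules
containing the finitely generated projective modules. -/
def IsRegularModule (R : Type) [Ring R] (M : Type) [AddCommGroup M] [Module R M] : Prop :=
  ∀ P : ModuleCat.{0} R → Prop, IsExactClass P → IsCocompleteClass P →
    (∀ N, FGProj N → P N) → P (ModuleCat.of R M)

/-- A ring `A` is *regular on the right* if the category of right `A`-modules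
(i.e. left `Aᵐᵒᵖ`-modules) is regular. -/
def RightRegular (A : Type) [Ring A] : Prop := RegularModuleCategory Aᵐᵒᵖ

/-- A ring `A` is *regular on the left*. -/
def LeftRegular (A : Type) [Ring A] : Prop := RegularModuleCategory A

/-! ### The balanced tensor product `M ⊗_A N` over a (possibly noncommutative) ring `A`,
where `M` is a right `A`-module (a left `Aᵐᵒᵖ`-module) and `N` is a left `A`-module. -/

/-- The subgroup of relations defining the balanced tensor product `M ⊗_A N` as a quotient of
`M ⊗_ℤ N`: it is generated by the elements `(m · a) ⊗ n - m ⊗ (a · n)`. -/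
noncomputable def balancedRel (A : Type) [Ring A] (M N : Type) [AddCommGroup M] [Module Aᵐᵒᵖ M]
    [AddCommGroup N] [Module A N] : AddSubgroup (TensorProduct ℤ M N) :=
  AddSubgroup.closure
    {x | ∃ (a : A) (m : M) (n : N),
      x = (MulOpposite.op a • m) ⊗ₜ[ℤ] n - m ⊗ₜ[ℤ] (a • n)}

/-- The balanced tensor product `M ⊗_A N` of a right `A`-module `M` and a left `A`-module `N`,
defined as the quotient of `M ⊗_ℤ N` by the subgroup generated by the elements
`(m · a) ⊗ n - m ⊗ (a · n)`. -/
abbrev BalancedTensor (A : Type) [Ring A] (M N : Type) [AddCommGroup M] [Module Aᵐᵒᵖ M]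
    [AddCommGroup N] [Module A N] : Type :=
  TensorProduct ℤ M N ⧸ balancedRel A M N

/-- Functoriality of `M ⊗_A N` in the right module (first) variable. -/
noncomputable def balancedMapLeft {A : Type} [Ring A] {M M' N : Type} [AddCommGroup M] [Module Aᵐᵒᵖ M]
    [AddCommGroup M'] [Module Aᵐᵒᵖ M'] [AddCommGroup N] [Module A N]
    (f : M →ₗ[Aᵐᵒᵖ] M') : BalancedTensor A M N →+ BalancedTensor A M' N :=
  QuotientAddGroup.map _ _
    (TensorProduct.map f.toAddMonoidHom.toIntLinearMap LinearMap.id).toAddMonoidHom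
    (by
      rw [balancedRel, AddSubgroup.closure_le]
      rintro x ⟨a, m, n, rfl⟩
      simp only [SetLike.mem_coe, AddSubgroup.mem_comap, map_sub,
        LinearMap.toAddMonoidHom_coe, TensorProduct.map_tmul,
        AddMonoidHom.coe_toIntLinearMap, LinearMap.toAddMonoidHom_coe, LinearMap.id_coe, id_eq]
      exact AddSubgroup.subset_closure ⟨a, f m, n, by rw [map_smul]⟩)

/-- Functoriality of `M ⊗_A N` in the left module (second) variable. -/
noncomputable def balancedMapRight {A : Type} [Ring A] {M N N' : Type} [AddCommGroup M] [Module Aᵐᵒᵖ M]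
    [AddCommGroup N] [Module A N] [AddCommGroup N'] [Module A N']
    (g : N →ₗ[A] N') : BalancedTensor A M N →+ BalancedTensor A M N' :=
  QuotientAddGroup.map _ _
    (TensorProduct.map LinearMap.id g.toAddMonoidHom.toIntLinearMap).toAddMonoidHom
    (by
      rw [balancedRel, AddSubgroup.closure_le]
      rintro x ⟨a, m, n, rfl⟩
      simp only [SetLike.mem_coe, AddSubgroup.mem_comap, map_sub,
        LinearMap.toAddMonoidHom_coe, TensorProduct.map_tmul,
        AddMonoidHom.coe_toIntLinearMap, LinearMap.id_coe, id_eq]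
      exact AddSubgroup.subset_closure ⟨a, m, g n, by rw [map_smul]⟩)

/-- A left `A`-module `N` is *flat* if the functor `M ↦ M ⊗_A N`, from right `A`-modules to
abelian groups, sends short exact sequences to short exact sequences. -/
def LeftModuleFlat (A : Type) [Ring A] (N : Type) [AddCommGroup N] [Module A N] : Prop :=
  ∀ (M₁ M₂ M₃ : Type) [AddCommGroup M₁] [Module Aᵐᵒᵖ M₁] [AddCommGroup M₂] [Module Aᵐᵒᵖ M₂]
    [AddCommGroup M₃] [Module Aᵐᵒᵖ M₃] (f : M₁ →ₗ[Aᵐᵒᵖ] M₂) (g : M₂ →ₗ[Aᵐᵒᵖ] M₃),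
    Function.Injective f → Function.Surjective g → Function.Exact f g →
      Function.Injective (balancedMapLeft (N := N) f) ∧
        Function.Surjective (balancedMapLeft (N := N) g) ∧
          Function.Exact (balancedMapLeft (N := N) f) (balancedMapLeft (N := N) g)

/-- A right `A`-module `M` is *flat* if the functor `N ↦ M ⊗_A N`, from left `A`-modules to
abelian groups, sends short exact sequences to short exact sequences. -/
def RightModuleFlat (A : Type) [Ring A] (M : Type) [AddCommGroup M] [Module Aᵐᵒᵖ M] : Prop :=
  ∀ (N₁ N₂ N₃ : Type) [AddCommGroup N₁] [Module A N₁] [AddCommGroup N₂] [Module A N₂]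
    [AddCommGroup N₃] [Module A N₃] (f : N₁ →ₗ[A] N₂) (g : N₂ →ₗ[A] N₃),
    Function.Injective f → Function.Surjective g → Function.Exact f g →
      Function.Injective (balancedMapRight (M := M) f) ∧
        Function.Surjective (balancedMapRight (M := M) g) ∧
          Function.Exact (balancedMapRight (M := M) f) (balancedMapRight (M := M) g)

section Statement4

variable {A B : Type} [Ring A] [Ring B] [Module A B]

theorem balancedMapRight_mk {M N N' : Type} [AddCommGroup M] [Module Aᵐᵒᵖ M]
    [AddCommGroup N] [Module A N] [AddCommGroup N'] [Module A N'] (g : N →ₗ[A] N')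
    (y : TensorProduct ℤ M N) :
    balancedMapRight (M := M) g (QuotientAddGroup.mk y)
      = QuotientAddGroup.mk
          (TensorProduct.map LinearMap.id g.toAddMonoidHom.toIntLinearMap y) :=
  QuotientAddGroup.map_mk _ _ _ _ _

/-- Right multiplication by an element of `B` as an endomorphism of the left `A`-module `B`
(where the `A`-action commutes with right multiplication). -/
def rmulLin (hB : ∀ (a : A) (x y : B), a • (x * y) = (a • x) * y) (b : B) : B →ₗ[A] B where
  toFun x := x * b
  map_add' x y := add_mul x y b
  map_smul' a x := (hB a x b).symm

/-- The right `B`-module structure on the balanced tensor product `M ⊗_A B` coming from right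
multiplication on the second factor. -/
noncomputable def balancedTensorModule (M : Type) [AddCommGroup M] [Module Aᵐᵒᵖ M]
    (hB : ∀ (a : A) (x y : B), a • (x * y) = (a • x) * y) :
    Module Bᵐᵒᵖ (BalancedTensor A M B) :=
  letI : SMul Bᵐᵒᵖ (BalancedTensor A M B) :=
    ⟨fun b x => balancedMapRight (M := M) (rmulLin hB b.unop) x⟩
  Module.ofMinimalAxioms
    (fun r x y => map_add (balancedMapRight (M := M) (rmulLin hB r.unop)) x y)
    (fun r s x => by
      induction x using QuotientAddGroup.induction_on with
      | _ y =>
        show balancedMapRight (M := M) (rmulLin hB (r + s).unop) (QuotientAddGroup.mk y)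
          = balancedMapRight (M := M) (rmulLin hB r.unop) (QuotientAddGroup.mk y)
            + balancedMapRight (M := M) (rmulLin hB s.unop) (QuotientAddGroup.mk y)
        rw [balancedMapRight_mk, balancedMapRight_mk, balancedMapRight_mk,
          ← QuotientAddGroup.mk_add]
        congr 1
        have h1 : (rmulLin hB (r + s).unop).toAddMonoidHom.toIntLinearMap
            = (rmulLin hB r.unop).toAddMonoidHom.toIntLinearMap
              + (rmulLin hB s.unop).toAddMonoidHom.toIntLinearMap := by
          apply LinearMap.ext; intro x
          show x * (r + s).unop = x * r.unop + x * s.unop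
          rw [MulOpposite.unop_add, mul_add]
        rw [h1, TensorProduct.map_add_right, LinearMap.add_apply])
    (fun r s x => by
      induction x using QuotientAddGroup.induction_on with
      | _ y =>
        show balancedMapRight (M := M) (rmulLin hB (r * s).unop) (QuotientAddGroup.mk y)
          = balancedMapRight (M := M) (rmulLin hB r.unop)
              (balancedMapRight (M := M) (rmulLin hB s.unop) (QuotientAddGroup.mk y))
        rw [balancedMapRight_mk, balancedMapRight_mk, balancedMapRight_mk]
        congr 1
        have h1 : (rmulLin hB (r * s).unop).toAddMonoidHom.toIntLinearMap
            = ((rmulLin hB r.unop).toAddMonoidHom.toIntLinearMap).comp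
                ((rmulLin hB s.unop).toAddMonoidHom.toIntLinearMap) := by
          apply LinearMap.ext; intro x
          show x * (r * s).unop = (x * s.unop) * r.unop
          rw [MulOpposite.unop_mul, mul_assoc]
        rw [h1, ← LinearMap.comp_apply, ← TensorProduct.map_comp, LinearMap.id_comp])
    (fun x => by
      induction x using QuotientAddGroup.induction_on with
      | _ y =>
        show balancedMapRight (M := M) (rmulLin hB (1 : Bᵐᵒᵖ).unop) (QuotientAddGroup.mk y) = _
        rw [balancedMapRight_mk]
        have h1 : (rmulLin hB (1 : Bᵐᵒᵖ).unop).toAddMonoidHom.toIntLinearMap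
            = LinearMap.id := by
          apply LinearMap.ext; intro x
          show x * (1 : B) = x
          rw [mul_one]
        rw [h1, TensorProduct.map_id]
        rfl)

end Statement4


section Proof4

open MulOpposite

variable {A B : Type} [Ring A] [Ring B] [Module A B] (α : A →+* B)

theorem hBmul (hα : ∀ (a : A) (x : B), a • x = α a * x) :
    ∀ (a : A) (x y : B), a • (x * y) = (a • x) * y := fun a x y => by
  rw [hα, hα, mul_assoc]

variable (hα : ∀ (a : A) (x : B), a • x = α a * x)

theorem balancedMapLeft_mk {M M' N : Type} [AddCommGroup M] [Module Aᵐᵒᵖ M]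
    [AddCommGroup M'] [Module Aᵐᵒᵖ M'] [AddCommGroup N] [Module A N] (f : M →ₗ[Aᵐᵒᵖ] M')
    (y : TensorProduct ℤ M N) :
    balancedMapLeft (N := N) f (QuotientAddGroup.mk y)
      = QuotientAddGroup.mk
          (TensorProduct.map f.toAddMonoidHom.toIntLinearMap LinearMap.id y) :=
  QuotientAddGroup.map_mk _ _ _ _ _

theorem mk_smul_tmul {M : Type} [AddCommGroup M] [Module Aᵐᵒᵖ M] {N : Type} [AddCommGroup N]
    [Module A N] (a : A) (m : M) (n : N) :
    (QuotientAddGroup.mk ((op a • m) ⊗ₜ[ℤ] n) : BalancedTensor A M N)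
      = QuotientAddGroup.mk (m ⊗ₜ[ℤ] (a • n)) := by
  rw [QuotientAddGroup.eq, neg_add_eq_sub, ← neg_sub]
  exact neg_mem (AddSubgroup.subset_closure ⟨a, m, n, rfl⟩)

theorem tmap_comm {M M' N N' : Type} [AddCommGroup M] [AddCommGroup M'] [AddCommGroup N]
    [AddCommGroup N'] (f : M →ₗ[ℤ] M') (g : N →ₗ[ℤ] N') (y : TensorProduct ℤ M N) :
    TensorProduct.map f LinearMap.id (TensorProduct.map LinearMap.id g y)
      = TensorProduct.map LinearMap.id g (TensorProduct.map f LinearMap.id y) := by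
  rw [← LinearMap.comp_apply, ← LinearMap.comp_apply, ← TensorProduct.map_comp,
    ← TensorProduct.map_comp, LinearMap.comp_id, LinearMap.id_comp, LinearMap.comp_id,
    LinearMap.id_comp]

theorem bml_bmr_comm {M M' N N' : Type} [AddCommGroup M] [Module Aᵐᵒᵖ M]
    [AddCommGroup M'] [Module Aᵐᵒᵖ M'] [AddCommGroup N] [Module A N] [AddCommGroup N']
    [Module A N'] (f : M →ₗ[Aᵐᵒᵖ] M') (g : N →ₗ[A] N') (x : BalancedTensor A M N) :
    balancedMapLeft (N := N') f (balancedMapRight (M := M) g x)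
      = balancedMapRight (M := M') g (balancedMapLeft (N := N) f x) := by
  induction x using QuotientAddGroup.induction_on with
  | _ y =>
    rw [balancedMapRight_mk, balancedMapLeft_mk, balancedMapLeft_mk, balancedMapRight_mk]
    exact congrArg _ (tmap_comm _ _ y)

/-- Extension of scalars, on objects. -/
noncomputable def EObj (N : ModuleCat.{0} Aᵐᵒᵖ) : ModuleCat.{0} Bᵐᵒᵖ :=
  @ModuleCat.of Bᵐᵒᵖ _ (BalancedTensor A N B) _ (balancedTensorModule N (hBmul α hα))

/-- The canonical quotient map into the extension of scalars. -/
noncomputable def emk (N : ModuleCat.{0} Aᵐᵒᵖ) (y : TensorProduct ℤ (↥N) B) : EObj α hα N :=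
  QuotientAddGroup.mk y

theorem emk_add (N : ModuleCat.{0} Aᵐᵒᵖ) (y y' : TensorProduct ℤ (↥N) B) :
    emk α hα N (y + y') = emk α hα N y + emk α hα N y' := rfl

theorem EObj_smul (N : ModuleCat.{0} Aᵐᵒᵖ) (b : Bᵐᵒᵖ) (x : EObj α hα N) :
    b • x = balancedMapRight (M := N) (rmulLin (hBmul α hα) b.unop) x := rfl

theorem EObj_smul_emk (N : ModuleCat.{0} Aᵐᵒᵖ) (b : Bᵐᵒᵖ) (m : N) (c : B) :
    b • emk α hα N (m ⊗ₜ[ℤ] c) = emk α hα N (m ⊗ₜ[ℤ] (c * b.unop)) := by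
  rw [EObj_smul]
  show balancedMapRight (M := ↥N) (rmulLin (hBmul α hα) b.unop) (QuotientAddGroup.mk _) = _
  rw [balancedMapRight_mk]
  rfl

/-- Extension of scalars, on morphisms. -/
noncomputable def EMap {N N' : ModuleCat.{0} Aᵐᵒᵖ} (f : N ⟶ N') :
    EObj α hα N ⟶ EObj α hα N' := ModuleCat.ofHom (X := EObj α hα N) (Y := EObj α hα N') {
  toFun := balancedMapLeft (N := B) f.hom
  map_add' := map_add _
  map_smul' b x := by
    simp only [RingHom.id_apply]
    exact bml_bmr_comm f.hom _ x }

/-- Extension of scalars, as a functor. -/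
noncomputable def EFun : ModuleCat.{0} Aᵐᵒᵖ ⥤ ModuleCat.{0} Bᵐᵒᵖ where
  obj := EObj α hα
  map f := EMap α hα f
  map_id N := by
    refine ModuleCat.hom_ext (LinearMap.ext fun x => ?_)
    induction x using QuotientAddGroup.induction_on with
    | _ y =>
      show balancedMapLeft (N := B) (𝟙 N : N ⟶ N).hom (QuotientAddGroup.mk y)
        = QuotientAddGroup.mk y
      rw [balancedMapLeft_mk]
      congr 1
      have h : ((𝟙 N : N ⟶ N).hom : N →ₗ[Aᵐᵒᵖ] N).toAddMonoidHom.toIntLinearMap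
          = (LinearMap.id : N →ₗ[ℤ] N) := rfl
      rw [h, TensorProduct.map_id, LinearMap.id_apply]
  map_comp {X Y Z} f g := by
    refine ModuleCat.hom_ext (LinearMap.ext fun x => ?_)
    induction x using QuotientAddGroup.induction_on with
    | _ y =>
      show balancedMapLeft (N := B) (f ≫ g).hom (QuotientAddGroup.mk y)
        = balancedMapLeft (N := B) g.hom (balancedMapLeft (N := B) f.hom (QuotientAddGroup.mk y))
      rw [balancedMapLeft_mk, balancedMapLeft_mk, balancedMapLeft_mk]
      congr 1
      have h : ((f ≫ g : X ⟶ Z).hom : X →ₗ[Aᵐᵒᵖ] Z).toAddMonoidHom.toIntLinearMap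
          = ((g.hom : Y →ₗ[Aᵐᵒᵖ] Z).toAddMonoidHom.toIntLinearMap).comp
              ((f.hom : X →ₗ[Aᵐᵒᵖ] Y).toAddMonoidHom.toIntLinearMap) := rfl
      rw [h, ← LinearMap.comp_apply, ← TensorProduct.map_comp, LinearMap.id_comp]

/-- Transpose along the extension/restriction adjunction, forward direction. -/
noncomputable def tFwd {N : ModuleCat.{0} Aᵐᵒᵖ} {T : ModuleCat.{0} Bᵐᵒᵖ}
    (φ : EObj α hα N ⟶ T) :
    N ⟶ (ModuleCat.restrictScalars (RingHom.op α)).obj T :=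
    ModuleCat.ofHom (X := N) (Y := (ModuleCat.restrictScalars (RingHom.op α)).obj T) {
  toFun m := φ (emk α hα N (m ⊗ₜ[ℤ] (1 : B)))
  map_add' m m' := by
    show φ (emk α hα N ((m + m') ⊗ₜ[ℤ] (1 : B)))
      = φ (emk α hα N (m ⊗ₜ[ℤ] (1 : B))) + φ (emk α hα N (m' ⊗ₜ[ℤ] (1 : B)))
    rw [TensorProduct.add_tmul, emk_add, map_add]
  map_smul' a m := by
    have h1 : emk α hα N ((a • m) ⊗ₜ[ℤ] (1 : B))
        = op (α a.unop) • emk α hα N (m ⊗ₜ[ℤ] (1 : B)) := by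
      rw [EObj_smul_emk]
      show (QuotientAddGroup.mk ((a • m) ⊗ₜ[ℤ] (1 : B)) : BalancedTensor A (↥N) B)
        = QuotientAddGroup.mk (m ⊗ₜ[ℤ] ((1 : B) * (op (α a.unop)).unop))
      exact (mk_smul_tmul a.unop m (1 : B)).trans
        (by rw [hα, mul_one, MulOpposite.unop_op, one_mul])
    show φ (emk α hα N ((a • m) ⊗ₜ[ℤ] (1 : B))) = _
    rw [h1, map_smul]
    rfl }

/-- Transpose, backward direction: the underlying `ℤ`-linear map. -/
noncomputable def tBwdAux {N : ModuleCat.{0} Aᵐᵒᵖ} {T : ModuleCat.{0} Bᵐᵒᵖ}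
    (ψ : N ⟶ (ModuleCat.restrictScalars (RingHom.op α)).obj T) :
    TensorProduct ℤ (↥N) B →ₗ[ℤ] T :=
  TensorProduct.lift
    { toFun := fun m =>
        { toFun := fun b => (op b : Bᵐᵒᵖ) • (ψ m : T)
          map_add' := fun b b' => by
            show (op (b + b') : Bᵐᵒᵖ) • (ψ m : T) = (op b : Bᵐᵒᵖ) • (ψ m : T) + (op b' : Bᵐᵒᵖ) • (ψ m : T)
            rw [MulOpposite.op_add, add_smul]
          map_smul' := fun z b => by
            show (op (z • b) : Bᵐᵒᵖ) • (ψ m : T) = z • ((op b : Bᵐᵒᵖ) • (ψ m : T))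
            rw [MulOpposite.op_smul, smul_assoc] }
      map_add' := fun m m' => by
        refine LinearMap.ext fun b => ?_
        show (op b : Bᵐᵒᵖ) • (ψ (m + m') : T) = (op b : Bᵐᵒᵖ) • (ψ m : T) + (op b : Bᵐᵒᵖ) • (ψ m' : T)
        rw [map_add, smul_add]
      map_smul' := fun z m => by
        refine LinearMap.ext fun b => ?_
        show (op b : Bᵐᵒᵖ) • (ψ (z • m) : T) = z • ((op b : Bᵐᵒᵖ) • (ψ m : T))
        rw [map_zsmul, smul_comm] }

theorem tBwdAux_tmul {N : ModuleCat.{0} Aᵐᵒᵖ} {T : ModuleCat.{0} Bᵐᵒᵖ}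
    (ψ : N ⟶ (ModuleCat.restrictScalars (RingHom.op α)).obj T) (m : N) (b : B) :
    tBwdAux α ψ (m ⊗ₜ[ℤ] b) = (op b : Bᵐᵒᵖ) • (ψ m : T) := rfl

include hα in
theorem tBwdAux_rel {N : ModuleCat.{0} Aᵐᵒᵖ} {T : ModuleCat.{0} Bᵐᵒᵖ}
    (ψ : N ⟶ (ModuleCat.restrictScalars (RingHom.op α)).obj T) :
    ∀ x ∈ balancedRel A (↥N) B, (tBwdAux α ψ).toAddMonoidHom x = 0 := by
  have h : balancedRel A (↥N) B ≤ (tBwdAux α ψ).toAddMonoidHom.ker := by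
    rw [balancedRel, AddSubgroup.closure_le]
    rintro x ⟨a, m, b, rfl⟩
    simp only [SetLike.mem_coe, AddMonoidHom.mem_ker, LinearMap.toAddMonoidHom_coe, map_sub]
    rw [sub_eq_zero, tBwdAux_tmul, tBwdAux_tmul, map_smul]
    show (op b : Bᵐᵒᵖ) • ((RingHom.op α) (op a) • (ψ m : T)) = (op (a • b) : Bᵐᵒᵖ) • (ψ m : T)
    rw [← mul_smul]
    congr 1
    show op b * op (α a) = _
    rw [hα, MulOpposite.op_mul]
  exact fun x hx => h hx

/-- Transpose along the extension/restriction adjunction, backward direction. -/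
noncomputable def tBwd {N : ModuleCat.{0} Aᵐᵒᵖ} {T : ModuleCat.{0} Bᵐᵒᵖ}
    (ψ : N ⟶ (ModuleCat.restrictScalars (RingHom.op α)).obj T) :
    EObj α hα N ⟶ T := ModuleCat.ofHom (X := EObj α hα N) (Y := T) {
  toFun := QuotientAddGroup.lift (balancedRel A (↥N) B) (tBwdAux α ψ).toAddMonoidHom
    (tBwdAux_rel α hα ψ)
  map_add' := map_add _
  map_smul' b x := by
    simp only [RingHom.id_apply]
    erw [EObj_smul]
    induction x using QuotientAddGroup.induction_on with
    | _ y =>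
      rw [balancedMapRight_mk]
      show tBwdAux α ψ _ = b • tBwdAux α ψ y
      induction y using TensorProduct.induction_on with
      | zero => rw [map_zero, map_zero, smul_zero]
      | tmul m c =>
        show tBwdAux α ψ (m ⊗ₜ[ℤ] (c * b.unop)) = b • tBwdAux α ψ (m ⊗ₜ[ℤ] c)
        erw [tBwdAux_tmul, tBwdAux_tmul, ← mul_smul]
        congr 1
      | add y₁ y₂ ih₁ ih₂ =>
        rw [map_add, map_add, map_add, smul_add, ih₁, ih₂] }

theorem tBwd_emk_tmul {N : ModuleCat.{0} Aᵐᵒᵖ} {T : ModuleCat.{0} Bᵐᵒᵖ}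
    (ψ : N ⟶ (ModuleCat.restrictScalars (RingHom.op α)).obj T) (m : N) (c : B) :
    tBwd α hα ψ (emk α hα N (m ⊗ₜ[ℤ] c)) = (op c : Bᵐᵒᵖ) • (ψ m : T) := rfl

/-- The extension/restriction adjunction. -/
noncomputable def EAdj : EFun α hα ⊣ ModuleCat.restrictScalars (RingHom.op α) :=
  Adjunction.mkOfHomEquiv
    { homEquiv := fun N T =>
        { toFun := tFwd α hα
          invFun := tBwd α hα
          left_inv := fun φ => by
            refine ModuleCat.hom_ext (LinearMap.ext fun x => ?_)
            induction x using QuotientAddGroup.induction_on with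
            | _ y =>
              induction y using TensorProduct.induction_on with
              | zero =>
                show tBwd α hα (tFwd α hα φ) 0 = φ 0
                rw [map_zero, map_zero]
              | tmul m c =>
                show tBwd α hα (tFwd α hα φ) (emk α hα N (m ⊗ₜ[ℤ] c))
                  = φ (emk α hα N (m ⊗ₜ[ℤ] c))
                rw [tBwd_emk_tmul]
                show (op c : Bᵐᵒᵖ) • φ (emk α hα N (m ⊗ₜ[ℤ] (1 : B))) = _
                erw [← map_smul, EObj_smul_emk, MulOpposite.unop_op, one_mul]
              | add y₁ y₂ ih₁ ih₂ =>
                erw [QuotientAddGroup.mk_add, map_add, map_add, ih₁, ih₂]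
          right_inv := fun ψ => by
            refine ModuleCat.hom_ext (LinearMap.ext fun m => ?_)
            show tBwd α hα ψ (emk α hα N (m ⊗ₜ[ℤ] (1 : B))) = ψ m
            rw [tBwd_emk_tmul, MulOpposite.op_one, one_smul] }
      homEquiv_naturality_left_symm := fun {N' N T} f g => by
        refine ModuleCat.hom_ext (LinearMap.ext fun x => ?_)
        induction x using QuotientAddGroup.induction_on with
        | _ y =>
          induction y using TensorProduct.induction_on with
          | zero =>
            show tBwd α hα (f ≫ g) 0 = tBwd α hα g (balancedMapLeft (N := B) f.hom 0)
            erw [map_zero]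
          | tmul m c =>
            show tBwd α hα (f ≫ g) (emk α hα N' (m ⊗ₜ[ℤ] c))
              = tBwd α hα g (balancedMapLeft (N := B) f.hom (QuotientAddGroup.mk (m ⊗ₜ[ℤ] c)))
            rw [tBwd_emk_tmul, balancedMapLeft_mk]
            show _ = tBwd α hα g (emk α hα N (f m ⊗ₜ[ℤ] c))
            rw [tBwd_emk_tmul]
            rfl
          | add y₁ y₂ ih₁ ih₂ =>
            show tBwd α hα (f ≫ g) (QuotientAddGroup.mk (y₁ + y₂))
              = tBwd α hα g (balancedMapLeft (N := B) f.hom (QuotientAddGroup.mk (y₁ + y₂)))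
            erw [QuotientAddGroup.mk_add, map_add, map_add, map_add]
            exact congrArg₂ (· + ·) ih₁ ih₂
      homEquiv_naturality_right := fun {N T T'} f g => ModuleCat.hom_ext (LinearMap.ext fun m => rfl) }

end Proof4

section Proof4b

open MulOpposite

variable {A B : Type} [Ring A] [Ring B] [Module A B] (α : A →+* B)
variable (hα : ∀ (a : A) (x : B), a • x = α a * x)

theorem emk_opsmul (N : ModuleCat.{0} Aᵐᵒᵖ) (a : Aᵐᵒᵖ) (m : N) :
    emk α hα N ((a • m) ⊗ₜ[ℤ] (1 : B))
      = op (α a.unop) • emk α hα N (m ⊗ₜ[ℤ] (1 : B)) := by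
  rw [EObj_smul_emk]
  show (QuotientAddGroup.mk ((a • m) ⊗ₜ[ℤ] (1 : B)) : BalancedTensor A (↥N) B)
    = QuotientAddGroup.mk (m ⊗ₜ[ℤ] ((1 : B) * (op (α a.unop)).unop))
  exact (mk_smul_tmul a.unop m (1 : B)).trans
    (by rw [hα, mul_one, MulOpposite.unop_op, one_mul])

theorem emk_tmul_eq_smul (N : ModuleCat.{0} Aᵐᵒᵖ) (m : N) (c : B) :
    emk α hα N (m ⊗ₜ[ℤ] c) = op c • emk α hα N (m ⊗ₜ[ℤ] (1 : B)) := by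
  rw [EObj_smul_emk, MulOpposite.unop_op, one_mul]

theorem EObj_finite (N : ModuleCat.{0} Aᵐᵒᵖ) (h : Module.Finite Aᵐᵒᵖ N) :
    Module.Finite Bᵐᵒᵖ (EObj α hα N) := by
  obtain ⟨S, hS⟩ := h.fg_top
  refine ⟨?_⟩
  rw [Submodule.fg_def]
  refine ⟨(fun m : N => emk α hα N (m ⊗ₜ[ℤ] (1 : B))) '' ↑S,
    Set.Finite.image _ (Finset.finite_toSet S), ?_⟩
  set W := Submodule.span Bᵐᵒᵖ ((fun m : N => emk α hα N (m ⊗ₜ[ℤ] (1 : B))) '' ↑S) with hW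
  rw [eq_top_iff]
  have key : ∀ m : N, emk α hα N (m ⊗ₜ[ℤ] (1 : B)) ∈ W := by
    let σ : Submodule Aᵐᵒᵖ (↥N) :=
      { carrier := {m : ↥N | emk α hα N (m ⊗ₜ[ℤ] (1 : B)) ∈ W}
        add_mem' := fun {m m'} hm hm' => by
          show emk α hα N ((m + m') ⊗ₜ[ℤ] (1 : B)) ∈ W
          rw [TensorProduct.add_tmul, emk_add]
          exact W.add_mem hm hm'
        zero_mem' := by
          show emk α hα N ((0 : ↥N) ⊗ₜ[ℤ] (1 : B)) ∈ W
          rw [TensorProduct.zero_tmul]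
          exact W.zero_mem
        smul_mem' := fun a m hm => by
          show emk α hα N ((a • m) ⊗ₜ[ℤ] (1 : B)) ∈ W
          rw [emk_opsmul]
          exact W.smul_mem _ hm }
    intro m
    have hσ : (⊤ : Submodule Aᵐᵒᵖ (↥N)) ≤ σ := by
      rw [← hS]
      exact Submodule.span_le.mpr fun n hn => Submodule.subset_span ⟨n, hn, rfl⟩
    exact hσ Submodule.mem_top
  intro x _
  induction x using QuotientAddGroup.induction_on with
  | _ y =>
    induction y using TensorProduct.induction_on with
    | zero =>
      show emk α hα N 0 ∈ W
      have : emk α hα N 0 = 0 := rfl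
      rw [this]
      exact W.zero_mem
    | tmul m c =>
      show emk α hα N (m ⊗ₜ[ℤ] c) ∈ W
      rw [emk_tmul_eq_smul]
      exact W.smul_mem _ (key m)
    | add y₁ y₂ ih₁ ih₂ =>
      show emk α hα N (y₁ + y₂) ∈ W
      rw [emk_add]
      exact W.add_mem (ih₁ Submodule.mem_top) (ih₂ Submodule.mem_top)

theorem EObj_projective (N : ModuleCat.{0} Aᵐᵒᵖ) (h : Module.Projective Aᵐᵒᵖ N) :
    Module.Projective Bᵐᵒᵖ (EObj α hα N) := by
  refine Module.Projective.of_lifting_property.{0, 0} ?_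
  intro M' N' _ _ _ _ f g hf
  let T : ModuleCat.{0} Bᵐᵒᵖ := ModuleCat.of Bᵐᵒᵖ M'
  let T' : ModuleCat.{0} Bᵐᵒᵖ := ModuleCat.of Bᵐᵒᵖ N'
  let f' : T ⟶ T' := ModuleCat.ofHom f
  let g' : EObj α hα N ⟶ T' := ModuleCat.ofHom (X := EObj α hα N) (Y := T') g
  haveI : Module.Projective Aᵐᵒᵖ (↥N) := h
  have hres : Function.Surjective
      ⇑((ModuleCat.restrictScalars (RingHom.op α)).map f') := hf
  obtain ⟨hh, hhh⟩ := Module.projective_lifting_property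
    ((ModuleCat.restrictScalars (RingHom.op α)).map f').hom
    ((EAdj α hα).homEquiv N T' g').hom hres
  let hh' : N ⟶ (ModuleCat.restrictScalars (RingHom.op α)).obj T :=
    ModuleCat.ofHom (X := N) (Y := (ModuleCat.restrictScalars (RingHom.op α)).obj T) hh
  refine ⟨(((EAdj α hα).homEquiv N T).symm hh').hom, ?_⟩
  have h2 : (((EAdj α hα).homEquiv N T).symm hh') ≫ f'
      = ((EAdj α hα).homEquiv N T').symm
          (hh' ≫ (ModuleCat.restrictScalars (RingHom.op α)).map f') :=
    ((EAdj α hα).homEquiv_naturality_right_symm hh' f').symm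
  have h3 : hh' ≫ (ModuleCat.restrictScalars (RingHom.op α)).map f'
      = (EAdj α hα).homEquiv N T' g' := ModuleCat.hom_ext hhh
  have h4 : (((EAdj α hα).homEquiv N T).symm hh') ≫ f' = g' := by
    rw [h2, h3]
    exact ((EAdj α hα).homEquiv N T').symm_apply_apply g'
  exact congrArg ModuleCat.Hom.hom h4

end Proof4b

/-- Let `α : A → B` be a ring homomorphism such that `B`, regarded as a left
`A`-module via `α`, is flat, and let `M` be an `A`-regular right `A`-module.  Then the right
`B`-module `M ⊗_A B` is `B`-regular. -/
theorem statement4 (A B : Type) [Ring A] [Ring B] (α : A →+* B)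
    [Module A B] (hα : ∀ (a : A) (x : B), a • x = α a * x)
    (hBflat : LeftModuleFlat A B)
    (M : Type) [AddCommGroup M] [Module Aᵐᵒᵖ M] (hM : IsRegularModule Aᵐᵒᵖ M) :
    @IsRegularModule Bᵐᵒᵖ _ (BalancedTensor A M B) _
      (balancedTensorModule M (fun a x y => by rw [hα, hα, mul_assoc])) := by
  intro P hPex hPcc hPfg
  let Q : ModuleCat.{0} Aᵐᵒᵖ → Prop := fun N => P ((EFun α hα).obj N)
  have hQex : IsExactClass Q := by
    intro X Y Z f g hf hg hfg
    obtain ⟨hf', hg', hfg'⟩ := hBflat X Y Z f.hom g.hom hf hg hfg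
    exact hPex _ _ _ ((EFun α hα).map f) ((EFun α hα).map g) hf' hg' hfg'
  have hQcc : IsCocompleteClass Q := by
    intro J _ _ F c hc hj
    haveI : Limits.PreservesColimitsOfSize.{0, 0} (EFun α hα) :=
      (EAdj α hα).leftAdjoint_preservesColimits
    exact hPcc J (F ⋙ EFun α hα) ((EFun α hα).mapCocone c)
      (Limits.isColimitOfPreserves (EFun α hα) hc) hj
  have hQfg : ∀ N, FGProj N → Q N := fun N hN =>
    hPfg _ ⟨EObj_finite α hα N hN.1, EObj_projective α hα N hN.2⟩
  exact hM Q hQex hQcc hQfg
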